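/- For a word w = (s_1,...,s_m) in a finite Coxeter group W, an element u ∈ W, and a simple reflection s, the set of distinguished u-subwords of the word ws with exactly k skips is in bijection with: the distinguished us-subwords of w with k skips if us < u; and with the disjoint union of distinguished us-subwords of w with k skips and distinguished u-subwords of w with k-1 skips if us > u. -/

import Mathlib

open scoped Classical

namespace Deodhar

variable {B : Type*} {W : Type*} [Group W] {M : CoxeterMatrix B}

/-- Given a word `w` in the simple-reflection indices and a subword-selector
`f : Fin w.length → Bool` (`f j = true` means the letter at position `j` is used,
`f j = false` means it is skipped, i.e. replaced by the identity `e`), the partial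
product `u_(i) = u_1 ⋯ u_i` of the first `i` letters of the subword. -/
noncomputable def pp (cs : CoxeterSystem M W) (w : List B) (f : Fin w.length → Bool)
    (i : ℕ) : W :=
  ((((List.finRange w.length).take i)).map
    (fun j => if f j then cs.simple (w.get j) else 1)).prod

/-- The full product of the subword. -/
noncomputable def sprod (cs : CoxeterSystem M W) (w : List B)
    (f : Fin w.length → Bool) : W :=
  pp cs w f w.length

/-- The subword selected by `f` is distinguished: for each position `j`,
`ℓ(u_(j+1)) ≤ ℓ(u_(j) · s_j)`, i.e. `u_(j+1) ≤ u_(j) s_j` in weak order. -/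
def Distinguished (cs : CoxeterSystem M W) (w : List B) (f : Fin w.length → Bool) : Prop :=
  ∀ j : Fin w.length,
    cs.length (pp cs w f ((j : ℕ) + 1)) ≤ cs.length (pp cs w f (j : ℕ) * cs.simple (w.get j))

/-- The number of skips `e_u = #{j : u_j = e}`. -/
def skips (w : List B) (f : Fin w.length → Bool) : ℕ :=
  (Finset.univ.filter (fun j : Fin w.length => f j = false)).card

/-- The number of descents `d_u = #{j : u_(j+1) < u_(j)}`. -/
noncomputable def descents (cs : CoxeterSystem M W) (w : List B)
    (f : Fin w.length → Bool) : ℕ :=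
  (Finset.univ.filter (fun j : Fin w.length =>
    cs.length (pp cs w f ((j : ℕ) + 1)) < cs.length (pp cs w f (j : ℕ)))).card

/-- The reflection `s_j^{u_(j)} = u_(j) s_j u_(j)⁻¹` associated to position `j`. -/
noncomputable def reflAt (cs : CoxeterSystem M W) (w : List B) (f : Fin w.length → Bool)
    (j : Fin w.length) : W :=
  pp cs w f (j : ℕ) * cs.simple (w.get j) * (pp cs w f (j : ℕ))⁻¹

/-- The color `k_j = #{i < j : u_i ≠ e and s_i^{u_(i)} = s_j^{u_(j)}}` of position `j`. -/
noncomputable def color (cs : CoxeterSystem M W) (w : List B) (f : Fin w.length → Bool)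
    (j : Fin w.length) : ℕ :=
  (Finset.univ.filter (fun i : Fin w.length =>
    (i : ℕ) < (j : ℕ) ∧ f i = true ∧ reflAt cs w f i = reflAt cs w f j)).card

-- auxiliary lemmas

variable (cs : CoxeterSystem M W) (w : List B) (s₀ : B)

lemma pp_succ' (f : Fin w.length → Bool) (i : ℕ) (h : i < w.length) :
    pp cs w f (i + 1) = pp cs w f i * (if f ⟨i, h⟩ then cs.simple (w.get ⟨i, h⟩) else 1) := by
  unfold pp
  rw [List.take_succ, List.getElem?_eq_getElem (by simpa using h), List.map_append,
    List.prod_append]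
  simp [List.getElem_finRange]

def lastIdx : Fin (w ++ [s₀]).length := ⟨w.length, by simp⟩

def restrict (f : Fin (w ++ [s₀]).length → Bool) : Fin w.length → Bool :=
  fun j => f (Fin.castLE (by simp) j)

def extend (g : Fin w.length → Bool) (b : Bool) : Fin (w ++ [s₀]).length → Bool :=
  fun j => if h : (j : ℕ) < w.length then g ⟨j, h⟩ else b

lemma restrict_extend (g : Fin w.length → Bool) (b : Bool) :
    restrict w s₀ (extend w s₀ g b) = g := by
  funext j
  simp [restrict, extend, j.isLt]

lemma extend_last (g : Fin w.length → Bool) (b : Bool) :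
    extend w s₀ g b (lastIdx w s₀) = b := by
  simp [extend, lastIdx]

lemma extend_restrict (f : Fin (w ++ [s₀]).length → Bool) :
    extend w s₀ (restrict w s₀ f) (f (lastIdx w s₀)) = f := by
  funext j
  by_cases h : (j : ℕ) < w.length
  · simp only [extend, dif_pos h, restrict]
    congr 1
  · have hj : (j : ℕ) = w.length := by
      have := j.isLt; simp at this; omega
    simp only [extend, dif_neg h]
    congr 1
    exact Fin.ext hj.symm
  
lemma pp_restrict (f : Fin (w ++ [s₀]).length → Bool) (i : ℕ) (hi : i ≤ w.length) :
    pp cs (w ++ [s₀]) f i = pp cs w (restrict w s₀ f) i := by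
  induction i with
  | zero => simp [pp]
  | succ n ih =>
    have hn : n < w.length := hi
    rw [pp_succ' cs (w ++ [s₀]) f n (by simp; omega), pp_succ' cs w _ n hn, ih hn.le]
    congr 1
    have hg : (w ++ [s₀]).get ⟨n, by simp; omega⟩ = w.get ⟨n, hn⟩ := by
      simp [List.getElem_append_left hn]
    rw [hg]
    congr 1

lemma sprod_append (f : Fin (w ++ [s₀]).length → Bool) :
    sprod cs (w ++ [s₀]) f =
      sprod cs w (restrict w s₀ f) * (if f (lastIdx w s₀) then cs.simple s₀ else 1) := by
  have h1 : sprod cs (w ++ [s₀]) f = pp cs (w ++ [s₀]) f (w.length + 1) := by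
    unfold sprod; congr 1; simp
  rw [h1, pp_succ' cs (w ++ [s₀]) f w.length (by simp),
    pp_restrict cs w s₀ f w.length le_rfl]
  have hg : (w ++ [s₀]).get ⟨w.length, by simp⟩ = s₀ := by simp
  rw [hg]
  rfl

lemma dist_append_iff (f : Fin (w ++ [s₀]).length → Bool) :
    Distinguished cs (w ++ [s₀]) f ↔
      Distinguished cs w (restrict w s₀ f) ∧
        cs.length (sprod cs (w ++ [s₀]) f) ≤
          cs.length (sprod cs w (restrict w s₀ f) * cs.simple s₀) := by
  have h1 : sprod cs (w ++ [s₀]) f = pp cs (w ++ [s₀]) f (w.length + 1) := by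
    unfold sprod; congr 1; simp
  constructor
  · intro hd
    constructor
    · intro j
      have := hd ⟨j, by simp⟩
      rw [pp_restrict cs w s₀ f j j.isLt.le, pp_restrict cs w s₀ f (j + 1) j.isLt] at this
      have hg : (w ++ [s₀]).get ⟨(j : ℕ), by simp⟩ = w.get j := by
        simp [List.getElem_append_left j.isLt]
      rwa [hg] at this
    · have h2 := hd (lastIdx w s₀)
      rw [h1]
      have hg : (w ++ [s₀]).get (lastIdx w s₀) = s₀ := by simp [lastIdx]
      rw [hg] at h2
      have h3 : cs.length (pp cs (w ++ [s₀]) f (w.length + 1)) ≤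
          cs.length (pp cs (w ++ [s₀]) f w.length * cs.simple s₀) := h2
      rwa [pp_restrict cs w s₀ f w.length le_rfl] at h3
  · rintro ⟨hd, hlast⟩ j
    rcases lt_or_eq_of_le (Nat.lt_succ_iff.mp (by simpa using j.isLt)) with h | h
    · have := hd ⟨j, h⟩
      rw [pp_restrict cs w s₀ f j h.le, pp_restrict cs w s₀ f (j + 1) h]
      have hg : (w ++ [s₀]).get j = w.get ⟨j, h⟩ := by
        simp [List.getElem_append_left h]
      rwa [hg]
    · have hj : j = lastIdx w s₀ := Fin.ext h
      subst hj
      have hg : (w ++ [s₀]).get (lastIdx w s₀) = s₀ := by simp [lastIdx]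
      show cs.length (pp cs (w ++ [s₀]) f (w.length + 1)) ≤
        cs.length (pp cs (w ++ [s₀]) f w.length * cs.simple ((w ++ [s₀]).get (lastIdx w s₀)))
      rw [← h1, hg, pp_restrict cs w s₀ f w.length le_rfl]
      exact hlast

lemma skips_append (f : Fin (w ++ [s₀]).length → Bool) :
    skips (w ++ [s₀]) f =
      skips w (restrict w s₀ f) + (if f (lastIdx w s₀) then 0 else 1) := by
  classical
  have hlen : (w ++ [s₀]).length = w.length + 1 := by simp
  have step1 : skips (w ++ [s₀]) f =
      ∑ j : Fin (w.length + 1), (if f ((finCongr hlen).symm j) = false then 1 else 0) := by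
    rw [skips, Finset.card_filter]
    exact (Fintype.sum_equiv (finCongr hlen).symm
      (fun j : Fin (w.length + 1) => if f ((finCongr hlen).symm j) = false then 1 else 0)
      (fun j : Fin (w ++ [s₀]).length => if f j = false then 1 else 0) (fun j => rfl)).symm
  rw [step1, Fin.sum_univ_castSucc]
  have step2 : ∑ j : Fin w.length,
      (if f ((finCongr hlen).symm j.castSucc) = false then 1 else 0) =
      skips w (restrict w s₀ f) := by
    rw [skips, Finset.card_filter]
    exact Finset.sum_congr rfl (fun j _ => rfl)
  rw [step2]
  have step3 : (if f ((finCongr hlen).symm (Fin.last w.length)) = false then 1 else 0) =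
      (if f (lastIdx w s₀) then 0 else 1) := by
    have he : (finCongr hlen).symm (Fin.last w.length) = lastIdx w s₀ := rfl
    rw [he]
    cases f (lastIdx w s₀) <;> simp
  rw [step3]

end Deodhar

open Deodhar in
theorem deodhar_recurrence
    {B : Type*} {W : Type*} [Group W] [Finite W] {M : CoxeterMatrix B}
    (cs : CoxeterSystem M W) (w : List B) (s₀ : B) (u : W) (k : ℕ) :
    (cs.length (u * cs.simple s₀) < cs.length u →
      Nonempty
        ({f : Fin (w ++ [s₀]).length → Bool // Distinguished cs (w ++ [s₀]) f ∧
            sprod cs (w ++ [s₀]) f = u ∧ skips (w ++ [s₀]) f = k} ≃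
         {f : Fin w.length → Bool // Distinguished cs w f ∧
            sprod cs w f = u * cs.simple s₀ ∧ skips w f = k})) ∧
    (cs.length u < cs.length (u * cs.simple s₀) →
      Nonempty
        ({f : Fin (w ++ [s₀]).length → Bool // Distinguished cs (w ++ [s₀]) f ∧
            sprod cs (w ++ [s₀]) f = u ∧ skips (w ++ [s₀]) f = k} ≃
          ({f : Fin w.length → Bool // Distinguished cs w f ∧
              sprod cs w f = u * cs.simple s₀ ∧ skips w f = k} ⊕
           {f : Fin w.length → Bool // Distinguished cs w f ∧
              sprod cs w f = u ∧ skips w f + 1 = k}))) := by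
  -- common facts
  have hsq : cs.simple s₀ * cs.simple s₀ = 1 := cs.simple_mul_simple_self s₀
  -- sprod of restriction when last letter used
  have sprodT : ∀ f : Fin (w ++ [s₀]).length → Bool, f (lastIdx w s₀) = true →
      sprod cs (w ++ [s₀]) f = u → sprod cs w (restrict w s₀ f) = u * cs.simple s₀ := by
    intro f hL hsp
    rw [sprod_append, hL] at hsp
    simp only [if_true] at hsp
    rw [← hsp, mul_assoc, hsq, mul_one]
  have sprodF : ∀ f : Fin (w ++ [s₀]).length → Bool, f (lastIdx w s₀) = false →
      sprod cs (w ++ [s₀]) f = u → sprod cs w (restrict w s₀ f) = u := by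
    intro f hL hsp
    rw [sprod_append, hL] at hsp
    simpa using hsp
  have lenF : ∀ f : Fin (w ++ [s₀]).length → Bool, f (lastIdx w s₀) = false →
      Distinguished cs (w ++ [s₀]) f → sprod cs (w ++ [s₀]) f = u →
      cs.length u ≤ cs.length (u * cs.simple s₀) := by
    intro f hL hd hsp
    have h2 := ((dist_append_iff cs w s₀ f).mp hd).2
    rw [hsp, sprodF f hL hsp] at h2
    exact h2
  -- distinguishedness for the `true` extension
  have distT : ∀ g : Fin w.length → Bool, Distinguished cs w g →
      sprod cs w g = u * cs.simple s₀ →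
      Distinguished cs (w ++ [s₀]) (extend w s₀ g true) ∧
        sprod cs (w ++ [s₀]) (extend w s₀ g true) = u := by
    intro g hd hsp
    have hsp2 : sprod cs (w ++ [s₀]) (extend w s₀ g true) = u := by
      rw [sprod_append, restrict_extend, extend_last]
      simp only [if_true]
      rw [hsp, mul_assoc, hsq, mul_one]
    refine ⟨(dist_append_iff cs w s₀ _).mpr ⟨by rw [restrict_extend]; exact hd, ?_⟩, hsp2⟩
    rw [hsp2, restrict_extend, hsp, mul_assoc, hsq, mul_one]
  have distF : ∀ g : Fin w.length → Bool, Distinguished cs w g → sprod cs w g = u →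
      cs.length u ≤ cs.length (u * cs.simple s₀) →
      Distinguished cs (w ++ [s₀]) (extend w s₀ g false) ∧
        sprod cs (w ++ [s₀]) (extend w s₀ g false) = u := by
    intro g hd hsp hle
    have hsp2 : sprod cs (w ++ [s₀]) (extend w s₀ g false) = u := by
      rw [sprod_append, restrict_extend, extend_last]
      simpa using hsp
    refine ⟨(dist_append_iff cs w s₀ _).mpr ⟨by rw [restrict_extend]; exact hd, ?_⟩, hsp2⟩
    rw [hsp2, restrict_extend, hsp]
    exact hle
  have skipsT : ∀ f : Fin (w ++ [s₀]).length → Bool, f (lastIdx w s₀) = true →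
      skips (w ++ [s₀]) f = skips w (restrict w s₀ f) := by
    intro f hL; rw [skips_append, hL]; simp
  have skipsF : ∀ f : Fin (w ++ [s₀]).length → Bool, f (lastIdx w s₀) = false →
      skips (w ++ [s₀]) f = skips w (restrict w s₀ f) + 1 := by
    intro f hL; rw [skips_append, hL]; simp
  constructor
  · -- case us < u : last letter must be used
    intro hs
    have lastT : ∀ f : Fin (w ++ [s₀]).length → Bool, Distinguished cs (w ++ [s₀]) f →
        sprod cs (w ++ [s₀]) f = u → f (lastIdx w s₀) = true := by
      intro f hd hsp
      by_contra hb
      rw [Bool.not_eq_true] at hb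
      exact absurd (lenF f hb hd hsp) (not_le.mpr hs)
    refine ⟨⟨fun p => ⟨restrict w s₀ p.1, ?_, ?_, ?_⟩,
        fun q => ⟨extend w s₀ q.1 true, ?_, ?_, ?_⟩, ?_, ?_⟩⟩
    · exact ((dist_append_iff cs w s₀ p.1).mp p.2.1).1
    · exact sprodT p.1 (lastT p.1 p.2.1 p.2.2.1) p.2.2.1
    · rw [← skipsT p.1 (lastT p.1 p.2.1 p.2.2.1)]; exact p.2.2.2
    · exact (distT q.1 q.2.1 q.2.2.1).1
    · exact (distT q.1 q.2.1 q.2.2.1).2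
    · rw [skipsT _ (extend_last w s₀ q.1 true), restrict_extend]; exact q.2.2.2
    · intro p
      apply Subtype.ext
      show extend w s₀ (restrict w s₀ p.1) true = p.1
      rw [← lastT p.1 p.2.1 p.2.2.1, extend_restrict]
    · intro q
      apply Subtype.ext
      exact restrict_extend w s₀ q.1 true
  · -- case u < us : split on whether the last letter is used
    intro hs
    refine ⟨⟨fun p => if hL : p.1 (lastIdx w s₀) = true
        then Sum.inl ⟨restrict w s₀ p.1,
          ((dist_append_iff cs w s₀ p.1).mp p.2.1).1,
          sprodT p.1 hL p.2.2.1,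
          by rw [← skipsT p.1 hL]; exact p.2.2.2⟩
        else Sum.inr ⟨restrict w s₀ p.1,
          ((dist_append_iff cs w s₀ p.1).mp p.2.1).1,
          sprodF p.1 (Bool.not_eq_true _ ▸ hL) p.2.2.1,
          by rw [← skipsF p.1 (Bool.not_eq_true _ ▸ hL)]; exact p.2.2.2⟩,
        Sum.elim
          (fun q => ⟨extend w s₀ q.1 true,
            (distT q.1 q.2.1 q.2.2.1).1, (distT q.1 q.2.1 q.2.2.1).2,
            by rw [skipsT _ (extend_last w s₀ q.1 true), restrict_extend]; exact q.2.2.2⟩)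
          (fun q => ⟨extend w s₀ q.1 false,
            (distF q.1 q.2.1 q.2.2.1 hs.le).1, (distF q.1 q.2.1 q.2.2.1 hs.le).2,
            by rw [skipsF _ (extend_last w s₀ q.1 false), restrict_extend]; exact q.2.2.2⟩),
        ?_, ?_⟩⟩
    · intro p
      by_cases hL : p.1 (lastIdx w s₀) = true
      · beta_reduce
        rw [dif_pos hL]
        apply Subtype.ext
        show extend w s₀ (restrict w s₀ p.1) true = p.1
        rw [← hL, extend_restrict]
      · beta_reduce
        rw [dif_neg hL]
        apply Subtype.ext
        show extend w s₀ (restrict w s₀ p.1) false = p.1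
        rw [Bool.not_eq_true] at hL
        rw [← hL, extend_restrict]
    · intro q
      rcases q with q | q
      · show (if hL : extend w s₀ q.1 true (lastIdx w s₀) = true then _ else _) = _
        rw [dif_pos (extend_last w s₀ q.1 true)]
        congr 1
        apply Subtype.ext
        exact restrict_extend w s₀ q.1 true
      · show (if hL : extend w s₀ q.1 false (lastIdx w s₀) = true then _ else _) = _
        rw [dif_neg (by rw [extend_last]; exact Bool.false_ne_true)]
        congr 1
        apply Subtype.ext
        exact restrict_extend w s₀ q.1 false
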